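/- Let d ≥ 1 and let I : C²_b(ℝ^d) → C_b(ℝ^d) be Lipschitz with constant K₀ and satisfy the global comparison property. Let x ∈ ℝ^d and let φ ∈ C²_b(ℝ^d) satisfy 0 ≤ φ ≤ 1 and φ(x) = 0. Then for all u, v ∈ C²_b(ℝ^d): | I(φ·u)(x) − I(φ·v)(x) | ≤ K₀ · ‖φ‖_{C²} · sup_{y ∈ spt(φ)} |u(y) − v(y)|, where spt(φ) denotes the support of φ. -/

import Mathlib

open Metric Set

noncomputable section

abbrev Euc (d : ℕ) := EuclideanSpace ℝ (Fin d)

variable {d : ℕ}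

def supNorm (u : Euc d → ℝ) : ℝ := ⨆ x, |u x|

def gradSup (u : Euc d → ℝ) : ℝ := ⨆ x, ‖fderiv ℝ u x‖

def hessSup (u : Euc d → ℝ) : ℝ := ⨆ x, ‖iteratedFDeriv ℝ 2 u x‖

def C2Norm (u : Euc d → ℝ) : ℝ := supNorm u + gradSup u + hessSup u

def IsC2b (u : Euc d → ℝ) : Prop :=
  ContDiff ℝ 2 u ∧ ∃ M : ℝ, ∀ x, |u x| ≤ M ∧ ‖fderiv ℝ u x‖ ≤ M ∧ ‖iteratedFDeriv ℝ 2 u x‖ ≤ M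

def IsCb (f : Euc d → ℝ) : Prop := Continuous f ∧ ∃ M : ℝ, ∀ x, |f x| ≤ M

def GCP (dom : (Euc d → ℝ) → Prop) (I : (Euc d → ℝ) → Euc d → ℝ) : Prop :=
  ∀ u v, dom u → dom v → (∀ y, u y ≤ v y) → ∀ x, u x = v x → I u x ≤ I v x

def LipWith (K₀ : ℝ) (dom : (Euc d → ℝ) → Prop) (N : (Euc d → ℝ) → ℝ)
    (I : (Euc d → ℝ) → Euc d → ℝ) : Prop :=
  ∀ u v, dom u → dom v → ∀ x, |I u x - I v x| ≤ K₀ * N (fun y => u y - v y)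

lemma isC2b_bound {u : Euc d → ℝ} (hu : IsC2b u) :
    ∃ M : ℝ, 0 ≤ M ∧ ∀ x, |u x| ≤ M ∧ ‖fderiv ℝ u x‖ ≤ M ∧ ‖iteratedFDeriv ℝ 2 u x‖ ≤ M := by
  obtain ⟨-, M, hM⟩ := hu
  exact ⟨M, le_trans (abs_nonneg _) (hM 0).1, hM⟩

lemma norm_fderiv_eq (f : Euc d → ℝ) (x : Euc d) :
    ‖fderiv ℝ f x‖ = ‖iteratedFDeriv ℝ 1 f x‖ := by
  rw [← norm_iteratedFDeriv_fderiv (n := 0), norm_iteratedFDeriv_zero]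

lemma IsC2b.mul2 {f g : Euc d → ℝ} (hf : IsC2b f) (hg : IsC2b g) :
    IsC2b (fun y => f y * g y) := by
  obtain ⟨Mf, hMf0, hMf⟩ := isC2b_bound hf
  obtain ⟨Mg, hMg0, hMg⟩ := isC2b_bound hg
  refine ⟨hf.1.mul hg.1, 4 * Mf * Mg, fun x => ?_⟩
  have h0f : ‖iteratedFDeriv ℝ 0 f x‖ ≤ Mf := by rw [norm_iteratedFDeriv_zero]; exact (hMf x).1
  have h1f : ‖iteratedFDeriv ℝ 1 f x‖ ≤ Mf := by rw [← norm_fderiv_eq]; exact (hMf x).2.1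
  have h2f : ‖iteratedFDeriv ℝ 2 f x‖ ≤ Mf := (hMf x).2.2
  have h0g : ‖iteratedFDeriv ℝ 0 g x‖ ≤ Mg := by rw [norm_iteratedFDeriv_zero]; exact (hMg x).1
  have h1g : ‖iteratedFDeriv ℝ 1 g x‖ ≤ Mg := by rw [← norm_fderiv_eq]; exact (hMg x).2.1
  have h2g : ‖iteratedFDeriv ℝ 2 g x‖ ≤ Mg := (hMg x).2.2
  refine ⟨?_, ?_, ?_⟩
  · rw [abs_mul]
    nlinarith [(hMf x).1, (hMg x).1, abs_nonneg (f x), abs_nonneg (g x)]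
  · rw [norm_fderiv_eq]
    have key := norm_iteratedFDeriv_mul_le (𝕜 := ℝ) hf.1 hg.1 x (n := 1) (by norm_num)
    simp [Finset.sum_range_succ, norm_iteratedFDeriv_zero] at key
    simp only [norm_fderiv_eq] at key
    have e1 : |f x| * ‖iteratedFDeriv ℝ 1 g x‖ ≤ Mf * Mg :=
      mul_le_mul (hMf x).1 h1g (norm_nonneg _) hMf0
    have e2 : ‖iteratedFDeriv ℝ 1 f x‖ * |g x| ≤ Mf * Mg :=
      mul_le_mul h1f (hMg x).1 (abs_nonneg _) hMf0
    have e3 : 0 ≤ Mf * Mg := mul_nonneg hMf0 hMg0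
    linarith
  · have key := norm_iteratedFDeriv_mul_le (𝕜 := ℝ) hf.1 hg.1 x (n := 2) (by norm_num)
    simp [Finset.sum_range_succ, norm_iteratedFDeriv_zero] at key
    simp only [norm_fderiv_eq] at key
    have e1 : |f x| * ‖iteratedFDeriv ℝ 2 g x‖ ≤ Mf * Mg :=
      mul_le_mul (hMf x).1 h2g (norm_nonneg _) hMf0
    have e2 : ‖iteratedFDeriv ℝ 1 f x‖ * ‖iteratedFDeriv ℝ 1 g x‖ ≤ Mf * Mg :=
      mul_le_mul h1f h1g (norm_nonneg _) hMf0
    have e3 : ‖iteratedFDeriv ℝ 2 f x‖ * |g x| ≤ Mf * Mg :=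
      mul_le_mul h2f (hMg x).1 (abs_nonneg _) hMf0
    linarith

lemma IsC2b.add2 {f g : Euc d → ℝ} (hf : IsC2b f) (hg : IsC2b g) :
    IsC2b (fun y => f y + g y) := by
  obtain ⟨Mf, hMf0, hMf⟩ := isC2b_bound hf
  obtain ⟨Mg, hMg0, hMg⟩ := isC2b_bound hg
  refine ⟨hf.1.add hg.1, Mf + Mg, fun x => ?_⟩
  have hdf : DifferentiableAt ℝ f x := (hf.1.differentiable (by norm_num)).differentiableAt
  have hdg : DifferentiableAt ℝ g x := (hg.1.differentiable (by norm_num)).differentiableAt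
  refine ⟨?_, ?_, ?_⟩
  · calc |f x + g x| ≤ |f x| + |g x| := abs_add_le _ _
      _ ≤ Mf + Mg := add_le_add (hMf x).1 (hMg x).1
  · rw [fderiv_fun_add hdf hdg]
    calc ‖fderiv ℝ f x + fderiv ℝ g x‖ ≤ ‖fderiv ℝ f x‖ + ‖fderiv ℝ g x‖ := norm_add_le _ _
      _ ≤ Mf + Mg := add_le_add (hMf x).2.1 (hMg x).2.1
  · have h2f : ContDiff ℝ (2:ℕ) f := hf.1.of_le (by norm_num)
    have h2g : ContDiff ℝ (2:ℕ) g := hg.1.of_le (by norm_num)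
    rw [iteratedFDeriv_add_apply' h2f.contDiffAt h2g.contDiffAt]
    calc ‖iteratedFDeriv ℝ 2 f x + iteratedFDeriv ℝ 2 g x‖
        ≤ ‖iteratedFDeriv ℝ 2 f x‖ + ‖iteratedFDeriv ℝ 2 g x‖ := norm_add_le _ _
      _ ≤ Mf + Mg := add_le_add (hMf x).2.2 (hMg x).2.2

lemma isC2b_const (c : ℝ) : IsC2b (d := d) (fun _ => c) := by
  refine ⟨contDiff_const, |c|, fun x => ?_⟩
  refine ⟨le_refl _, ?_, ?_⟩
  · rw [fderiv_fun_const]; simp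
  · rw [iteratedFDeriv_const_of_ne (by norm_num)]; simp

lemma IsC2b.constMul {f : Euc d → ℝ} (hf : IsC2b f) (c : ℝ) :
    IsC2b (fun y => c * f y) := (isC2b_const c).mul2 hf

lemma abs_le_supNorm {u : Euc d → ℝ} (hu : IsC2b u) (y : Euc d) : |u y| ≤ supNorm u := by
  obtain ⟨M, -, hM⟩ := isC2b_bound hu
  exact le_ciSup ⟨M, by rintro _ ⟨z, rfl⟩; exact (hM z).1⟩ y

lemma C2Norm_nonneg {u : Euc d → ℝ} (hu : IsC2b u) : 0 ≤ C2Norm u := by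
  obtain ⟨M, hM0, hM⟩ := isC2b_bound hu
  have h1 : (0:ℝ) ≤ supNorm u := le_trans (abs_nonneg (u 0)) (abs_le_supNorm hu 0)
  have h2 : (0:ℝ) ≤ gradSup u := by
    refine le_trans (norm_nonneg (fderiv ℝ u 0)) ?_
    exact le_ciSup (f := fun z : Euc d => ‖fderiv ℝ u z‖)
      ⟨M, by rintro _ ⟨z, rfl⟩; exact (hM z).2.1⟩ (0 : Euc d)
  have h3 : (0:ℝ) ≤ hessSup u := by
    refine le_trans (norm_nonneg (iteratedFDeriv ℝ 2 u 0)) ?_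
    exact le_ciSup (f := fun z : Euc d => ‖iteratedFDeriv ℝ 2 u z‖)
      ⟨M, by rintro _ ⟨z, rfl⟩; exact (hM z).2.2⟩ (0 : Euc d)
  unfold C2Norm; linarith

set_option maxHeartbeats 1000000 in
lemma C2Norm_const_mul_le {φ : Euc d → ℝ} (hφ : IsC2b φ) {c : ℝ} (hc : 0 ≤ c) :
    C2Norm (fun y => c * φ y) ≤ c * C2Norm φ := by
  obtain ⟨M, hM0, hM⟩ := isC2b_bound hφ
  have hbd1 : BddAbove (Set.range fun y : Euc d => ‖fderiv ℝ φ y‖) :=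
    ⟨M, by rintro _ ⟨z, rfl⟩; exact (hM z).2.1⟩
  have hbd2 : BddAbove (Set.range fun y : Euc d => ‖iteratedFDeriv ℝ 2 φ y‖) :=
    ⟨M, by rintro _ ⟨z, rfl⟩; exact (hM z).2.2⟩
  have h1 : supNorm (fun y => c * φ y) ≤ c * supNorm φ := by
    refine ciSup_le fun y => ?_
    rw [abs_mul, abs_of_nonneg hc]
    exact mul_le_mul_of_nonneg_left (abs_le_supNorm hφ y) hc
  have h2 : gradSup (fun y => c * φ y) ≤ c * gradSup φ := by
    refine ciSup_le fun y => ?_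
    have hd : DifferentiableAt ℝ φ y := (hφ.1.differentiable (by norm_num)).differentiableAt
    rw [fderiv_const_mul hd c, norm_smul, Real.norm_eq_abs, abs_of_nonneg hc]
    exact mul_le_mul_of_nonneg_left (le_ciSup hbd1 y) hc
  have h3 : hessSup (fun y => c * φ y) ≤ c * hessSup φ := by
    refine ciSup_le fun y => ?_
    have h2φ : ContDiff ℝ (2:ℕ) φ := hφ.1.of_le (by norm_num)
    have hfun : (fun y : Euc d => c * φ y) = c • φ := by
      funext z; simp [Pi.smul_apply, smul_eq_mul]
    rw [hfun, iteratedFDeriv_const_smul_apply h2φ.contDiffAt, norm_smul, Real.norm_eq_abs,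
      abs_of_nonneg hc]
    exact mul_le_mul_of_nonneg_left (le_ciSup hbd2 y) hc
  unfold C2Norm; linarith

lemma one_sided {d : ℕ} (K₀ : ℝ) (hK₀ : 0 ≤ K₀)
    (I : (Euc d → ℝ) → Euc d → ℝ)
    (hLip : LipWith K₀ IsC2b C2Norm I) (hGCP : GCP IsC2b I)
    (x : Euc d) (φ : Euc d → ℝ) (hφ : IsC2b φ)
    (hφ01 : ∀ y, 0 ≤ φ y ∧ φ y ≤ 1) (hφx : φ x = 0)
    (u v : Euc d → ℝ) (hu : IsC2b u) (hv : IsC2b v)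
    (S : ℝ) (hS0 : 0 ≤ S) (hSb : ∀ y, φ y ≠ 0 → u y - v y ≤ S) :
    I (fun y => φ y * u y) x - I (fun y => φ y * v y) x ≤ K₀ * C2Norm φ * S := by
  have hφu : IsC2b (fun y => φ y * u y) := hφ.mul2 hu
  have hφv : IsC2b (fun y => φ y * v y) := hφ.mul2 hv
  have hSφ : IsC2b (fun y => S * φ y) := hφ.constMul S
  have hw : IsC2b (fun y => φ y * v y + S * φ y) := hφv.add2 hSφ
  have hle : ∀ y, φ y * u y ≤ φ y * v y + S * φ y := by
    intro y
    by_cases hy : φ y = 0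
    · simp [hy]
    · have h1 := hSb y hy
      have h2 := (hφ01 y).1
      nlinarith
  have step1 : I (fun y => φ y * u y) x ≤ I (fun y => φ y * v y + S * φ y) x :=
    hGCP _ _ hφu hw hle x (by simp [hφx])
  have step2 : |I (fun y => φ y * v y + S * φ y) x - I (fun y => φ y * v y) x| ≤
      K₀ * C2Norm (fun y => (φ y * v y + S * φ y) - φ y * v y) := hLip _ _ hw hφv x
  have heq : C2Norm (fun y => (φ y * v y + S * φ y) - φ y * v y) = C2Norm (fun y => S * φ y) := by
    congr 1; funext y; ring
  rw [heq] at step2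
  have step3 : C2Norm (fun y => S * φ y) ≤ S * C2Norm φ := C2Norm_const_mul_le hφ hS0
  calc I (fun y => φ y * u y) x - I (fun y => φ y * v y) x
      ≤ I (fun y => φ y * v y + S * φ y) x - I (fun y => φ y * v y) x := by linarith
    _ ≤ |I (fun y => φ y * v y + S * φ y) x - I (fun y => φ y * v y) x| := le_abs_self _
    _ ≤ K₀ * C2Norm (fun y => S * φ y) := step2
    _ ≤ K₀ * (S * C2Norm φ) := mul_le_mul_of_nonneg_left step3 hK₀
    _ = K₀ * C2Norm φ * S := by ring


/-- localized Lipschitz estimate for operators with the GCP, tested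
against a cutoff `φ` vanishing at `x`:
`|I(φu)(x) - I(φv)(x)| ≤ K₀ ‖φ‖_{C²} sup_{spt φ} |u - v|`. -/
theorem localized_estimate (d : ℕ) (hd : 1 ≤ d) (K₀ : ℝ) (hK₀ : 0 ≤ K₀)
    (I : (Euc d → ℝ) → Euc d → ℝ)
    (hmap : ∀ u, IsC2b u → IsCb (I u))
    (hLip : LipWith K₀ IsC2b C2Norm I)
    (hGCP : GCP IsC2b I)
    (x : Euc d) (φ : Euc d → ℝ) (hφ : IsC2b φ)
    (hφ01 : ∀ y, 0 ≤ φ y ∧ φ y ≤ 1) (hφx : φ x = 0)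
    (u v : Euc d → ℝ) (hu : IsC2b u) (hv : IsC2b v) :
    |I (fun y => φ y * u y) x - I (fun y => φ y * v y) x| ≤
      K₀ * C2Norm φ * (⨆ y ∈ Function.support φ, |u y - v y|) := by
  set S := ⨆ y ∈ Function.support φ, |u y - v y| with hS
  obtain ⟨Mu, hMu0, hMu⟩ := isC2b_bound hu
  obtain ⟨Mv, hMv0, hMv⟩ := isC2b_bound hv
  have hS0 : 0 ≤ S := Real.iSup_nonneg fun y => Real.iSup_nonneg fun _ => abs_nonneg _
  have hSb : ∀ y, φ y ≠ 0 → |u y - v y| ≤ S := by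
    intro y hy
    have hybd : ∀ z : Euc d, (⨆ _ : z ∈ Function.support φ, |u z - v z|) ≤ Mu + Mv := by
      intro z
      refine Real.iSup_le (fun _ => ?_) (by linarith)
      calc |u z - v z| ≤ |u z| + |v z| := abs_sub _ _
        _ ≤ Mu + Mv := add_le_add (hMu z).1 (hMv z).1
    have : (⨆ _ : y ∈ Function.support φ, |u y - v y|) = |u y - v y| := ciSup_pos hy
    rw [← this]
    exact le_ciSup ⟨Mu + Mv, by rintro _ ⟨z, rfl⟩; exact hybd z⟩ y
  rw [abs_sub_le_iff]
  constructor
  · exact one_sided K₀ hK₀ I hLip hGCP x φ hφ hφ01 hφx u v hu hv S hS0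
      (fun y hy => le_trans (le_abs_self _) (hSb y hy))
  · refine one_sided K₀ hK₀ I hLip hGCP x φ hφ hφ01 hφx v u hv hu S hS0 (fun y hy => ?_)
    calc v y - u y ≤ |v y - u y| := le_abs_self _
      _ = |u y - v y| := abs_sub_comm _ _
      _ ≤ S := hSb y hy

end
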